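/- Every ZLRR has a derived PLRR: there exist a positive integer L and non-negative integers d_1, …, d_L with d_1 > 0 and d_L > 0 such that P(x) divides the polynomial x^L − d_1 x^{L−1} − d_2 x^{L−2} − ⋯ − d_L in ℤ[x]. -/

import Mathlib

namespace ZD

def ff (k : ℕ) (c : ℕ → ℕ) : ℕ → ℕ
  | 0 => 1
  | (n+1) => ∑ i ∈ (Finset.Icc 1 k).attach,
      c i.1 * (if i.1 ≤ n + 1 then ff k c (n + 1 - i.1) else 0)
termination_by n => n
decreasing_by
  have h1 : 1 ≤ i.1 := (Finset.mem_Icc.mp i.2).1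
  omega

lemma ff_zero (k : ℕ) (c : ℕ → ℕ) : ff k c 0 = 1 := by rw [ff]

lemma ff_eq (k : ℕ) (c : ℕ → ℕ) {m : ℕ} (hm : 1 ≤ m) :
    ff k c m = ∑ i ∈ Finset.Icc 1 k, c i * (if i ≤ m then ff k c (m - i) else 0) := by
  obtain ⟨n, rfl⟩ : ∃ n, m = n + 1 := ⟨m - 1, by omega⟩
  rw [ff]
  exact Finset.sum_attach (Finset.Icc 1 k)
    (fun i => c i * (if i ≤ n + 1 then ff k c (n + 1 - i) else 0))

variable (k : ℕ) (c : ℕ → ℕ)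

/-- master recurrence without truncation, valid for m ≥ k (indeed m ≥ k suffices). -/
lemma ff_eq' {m : ℕ} (hm : k ≤ m) (hm1 : 1 ≤ m) :
    ff k c m = ∑ i ∈ Finset.Icc 1 k, c i * ff k c (m - i) := by
  rw [ff_eq k c hm1]
  refine Finset.sum_congr rfl (fun i hi => ?_)
  have h2 := Finset.mem_Icc.mp hi
  rw [if_pos (le_trans h2.2 hm)]

/-- supermultiplicativity -/
lemma ff_supermul (a b : ℕ) : ff k c a * ff k c b ≤ ff k c (a + b) := by
  induction a using Nat.strong_induction_on with
  | _ a ih =>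
    rcases Nat.eq_zero_or_pos a with rfl | ha
    · simp [ff_zero]
    · have hab : 1 ≤ a + b := by omega
      rw [ff_eq k c ha, ff_eq k c hab, Finset.sum_mul]
      refine Finset.sum_le_sum (fun i hi => ?_)
      have h2 := Finset.mem_Icc.mp hi
      by_cases hia : i ≤ a
      · rw [if_pos hia, if_pos (by omega : i ≤ a + b)]
        have : a + b - i = (a - i) + b := by omega
        rw [this, mul_assoc]
        exact Nat.mul_le_mul_left _ (ih (a - i) (by omega))
      · rw [if_neg hia]
        simp
/-- ff i ≥ c i for i in [1,k] -/
lemma ff_ge_c {i : ℕ} (hi : i ∈ Finset.Icc 1 k) : c i ≤ ff k c i := by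
  have h2 := Finset.mem_Icc.mp hi
  rw [ff_eq k c h2.1]
  calc c i = c i * (if i ≤ i then ff k c (i - i) else 0) := by
        simp [ff_zero]
    _ ≤ _ := Finset.single_le_sum (f := fun j => c j * (if j ≤ i then ff k c (i - j) else 0))
        (fun j _ => Nat.zero_le _) hi

lemma ff_mul_ge_one {a : ℕ} (ha : 1 ≤ ff k c a) (m : ℕ) : 1 ≤ ff k c (m * a) := by
  induction m with
  | zero => simp [ff_zero]
  | succ n ih =>
    have := ff_supermul k c (n * a) a
    have : 1 * 1 ≤ ff k c (n * a) * ff k c a := Nat.mul_le_mul ih ha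
    calc (1 : ℕ) = 1 * 1 := by ring
      _ ≤ ff k c (n * a) * ff k c a := this
      _ ≤ ff k c (n * a + a) := ff_supermul k c _ _
      _ = ff k c ((n + 1) * a) := by ring_nf

lemma bezout_finset (s : Finset ℕ) :
    ∃ z : ℕ → ℤ, ∑ i ∈ s, z i * (i : ℤ) = ((s.gcd id : ℕ) : ℤ) := by
  induction s using Finset.induction_on with
  | empty => exact ⟨fun _ => 0, by simp⟩
  | insert a s' ha ih =>
    obtain ⟨z, hz⟩ := ih
    refine ⟨fun i => if i = a then Nat.gcdA a (s'.gcd id) else z i * Nat.gcdB a (s'.gcd id), ?_⟩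
    rw [Finset.sum_insert ha, Finset.gcd_insert]
    have : ∀ i ∈ s', (if i = a then Nat.gcdA a (s'.gcd id) else z i * Nat.gcdB a (s'.gcd id)) * (i:ℤ)
        = (z i * (i:ℤ)) * Nat.gcdB a (s'.gcd id) := by
      intro i hi
      rw [if_neg (by rintro rfl; exact ha hi)]
      ring
    rw [Finset.sum_congr rfl this, ← Finset.sum_mul, hz]
    simp only [eq_self_iff_true, if_true, id_eq]
    have hg : (gcd a (s'.gcd id) : ℕ) = Nat.gcd a (s'.gcd id) := rfl
    rw [hg, Nat.gcd_eq_gcd_ab]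
    ring

lemma ff_combo (s : Finset ℕ) (w : ℕ → ℕ) (hs : ∀ i ∈ s, 1 ≤ ff k c i) :
    1 ≤ ff k c (∑ i ∈ s, w i * i) := by
  induction s using Finset.induction_on with
  | empty => simp [ff_zero]
  | insert a s' ha ih =>
    rw [Finset.sum_insert ha]
    have h1 : 1 ≤ ff k c (w a * a) := ff_mul_ge_one k c (hs a (Finset.mem_insert_self a s')) (w a)
    have h2 : 1 ≤ ff k c (∑ i ∈ s', w i * i) := ih (fun i hi => hs i (Finset.mem_insert_of_mem hi))
    calc (1:ℕ) = 1 * 1 := by ring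
      _ ≤ ff k c (w a * a) * ff k c (∑ i ∈ s', w i * i) := Nat.mul_le_mul h1 h2
      _ ≤ _ := ff_supermul k c _ _

/-- The numerical semigroup / Frobenius lemma. -/
lemma frobenius (hk : 2 ≤ k) (hck : 0 < c k)
    (hgcd : Finset.gcd ((Finset.Icc 1 k).filter fun m => c m ≠ 0) id = 1) :
    ∃ N0 : ℕ, 1 ≤ N0 ∧ ∀ n, N0 ≤ n → 1 ≤ ff k c n := by
  set T := (Finset.Icc 1 k).filter (fun m => c m ≠ 0) with hT
  have hTff : ∀ i ∈ T, 1 ≤ ff k c i := by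
    intro i hi
    rw [hT, Finset.mem_filter] at hi
    have := ff_ge_c k c hi.1
    omega
  obtain ⟨z, hz⟩ := bezout_finset T
  rw [hgcd] at hz
  -- w i := (z i mod k).toNat, A := Σ w i * i
  set w : ℕ → ℕ := fun i => ((z i) % (k : ℤ)).toNat with hw
  set A : ℕ := ∑ i ∈ T, w i * i with hA
  have hkz : (0:ℤ) < (k:ℤ) := by exact_mod_cast Nat.lt_of_lt_of_le Nat.zero_lt_two hk
  have hwcast : ∀ i, (w i : ℤ) = (z i) % (k : ℤ) := by
    intro i
    rw [hw]
    exact Int.toNat_of_nonneg (Int.emod_nonneg _ (ne_of_gt hkz))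
  have hmod : (k:ℤ) ∣ (A : ℤ) - 1 := by
    have expand : ∑ i ∈ T, ((w i:ℤ) - z i) * (i:ℤ)
        = (∑ i ∈ T, (w i:ℤ) * (i:ℤ)) - ∑ i ∈ T, z i * (i:ℤ) := by
      rw [← Finset.sum_sub_distrib]
      exact Finset.sum_congr rfl (fun i _ => by ring)
    have key : (A : ℤ) - 1 = ∑ i ∈ T, ((w i : ℤ) - z i) * (i:ℤ) := by
      rw [expand, hz, hA]
      push_cast
      ring
    rw [key]
    refine Finset.dvd_sum (fun i hi => ?_)
    refine dvd_mul_of_dvd_left ?_ _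
    rw [hwcast i]
    have heq : z i % (k:ℤ) - z i = -((k:ℤ) * (z i / k)) := by
      rw [Int.emod_def]; ring
    rw [heq]
    exact dvd_neg.mpr (Dvd.intro _ rfl)
  have hA1 : 1 ≤ A := by
    by_contra h
    have hA0 : A = 0 := by omega
    rw [hA0] at hmod
    have h1 : (k:ℤ) ∣ 1 := by
      have := dvd_neg.mpr hmod
      simpa using this
    have : (k:ℤ) ≤ 1 := Int.le_of_dvd one_pos h1
    omega
  have hffA : 1 ≤ ff k c A := ff_combo k c T w hTff
  have hffk : 1 ≤ ff k c k := by
    have hkT : k ∈ Finset.Icc 1 k := Finset.mem_Icc.mpr ⟨by omega, le_refl k⟩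
    have := ff_ge_c k c hkT
    omega
  have hk1 : 1 ≤ k * A + k := by
    have h1 : 1 ≤ k := by omega
    exact le_trans h1 (Nat.le_add_left k _)
  refine ⟨k * A + k, hk1, fun n hn => ?_⟩
  set r := n % k with hr
  have hrk : r < k := Nat.mod_lt _ (by omega)
  have hrA : r * A ≤ n := by
    have : r * A ≤ (k - 1) * A := Nat.mul_le_mul_right _ (by omega)
    have h2 : (k - 1) * A + A = k * A := by
      have : k - 1 + 1 = k := by omega
      calc (k-1) * A + A = ((k-1) + 1) * A := by ring
        _ = k * A := by rw [this]
    omega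
  -- k ∣ n - r * A
  have hAmod : A ≡ 1 [MOD k] := by
    have hcast : ((A - 1 : ℕ) : ℤ) = (A:ℤ) - 1 := by
      rw [Nat.cast_sub hA1]; norm_num
    have hdd : k ∣ A - 1 := by
      have : (k:ℤ) ∣ ((A - 1 : ℕ) : ℤ) := by rw [hcast]; exact hmod
      exact_mod_cast this
    exact ((Nat.modEq_iff_dvd' hA1).mpr hdd).symm
  have hmods : r * A ≡ n [MOD k] := by
    calc r * A ≡ r * 1 [MOD k] := Nat.ModEq.mul_left r hAmod
      _ = r := by ring
      _ ≡ n [MOD k] := by rw [hr]; exact (Nat.mod_modEq n k)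
  have hdvd : k ∣ n - r * A := (Nat.modEq_iff_dvd' hrA).mp hmods
  obtain ⟨q, hq⟩ := hdvd
  have hn' : n = r * A + k * q := by omega
  rw [hn']
  have h1 : 1 ≤ ff k c (r * A) := ff_mul_ge_one k c hffA r
  have h2 : 1 ≤ ff k c (k * q) := by
    rw [show k * q = q * k by ring]
    exact ff_mul_ge_one k c hffk q
  calc (1:ℕ) = 1 * 1 := by ring
    _ ≤ ff k c (r * A) * ff k c (k * q) := Nat.mul_le_mul h1 h2
    _ ≤ _ := ff_supermul k c _ _

lemma ff_coarse_mono {N0 : ℕ} (hN0 : ∀ n, N0 ≤ n → 1 ≤ ff k c n)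
    {a b : ℕ} (h : a + N0 ≤ b) : ff k c a ≤ ff k c b := by
  have hb : b = a + (b - a) := by omega
  calc ff k c a = ff k c a * 1 := by ring
    _ ≤ ff k c a * ff k c (b - a) := Nat.mul_le_mul_left _ (hN0 (b - a) (by omega))
    _ ≤ ff k c (a + (b - a)) := ff_supermul k c _ _
    _ = ff k c b := by rw [← hb]

lemma ff_window {n : ℕ} (hn : 1 ≤ n) :
    ff k c n ≤ (∑ i ∈ Finset.Icc 1 k, c i) * ∑ m ∈ Finset.Icc (n - k) (n - 1), ff k c m := by
  rw [ff_eq k c hn, Finset.sum_mul]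
  refine Finset.sum_le_sum (fun i hi => ?_)
  have h2 := Finset.mem_Icc.mp hi
  by_cases hin : i ≤ n
  · rw [if_pos hin]
    refine Nat.mul_le_mul_left _ ?_
    refine Finset.single_le_sum (f := fun m => ff k c m) (fun m _ => Nat.zero_le _) ?_
    refine Finset.mem_Icc.mpr ⟨by omega, by omega⟩
  · rw [if_neg hin]
    exact Nat.zero_le _

lemma ff_iter (hk : 2 ≤ k) (hck : 0 < c k) :
    ∀ t, 1 ≤ t → ∃ Ct, 1 ≤ Ct ∧ ∀ n, (t+1)*(k+1) ≤ n →
      ff k c n ≤ Ct * ∑ m ∈ Finset.Icc (n - t*k) (n - t), ff k c m := by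
  have hσ : 1 ≤ ∑ i ∈ Finset.Icc 1 k, c i := by
    have hkT : k ∈ Finset.Icc 1 k := Finset.mem_Icc.mpr ⟨by omega, le_refl k⟩
    have h : c k ≤ ∑ i ∈ Finset.Icc 1 k, c i :=
      Finset.single_le_sum (fun i _ => Nat.zero_le _) hkT
    omega
  set σ := ∑ i ∈ Finset.Icc 1 k, c i with hσdef
  intro t
  induction t with
  | zero => omega
  | succ t ih =>
    intro _
    rcases Nat.eq_zero_or_pos t with rfl | ht
    · refine ⟨σ, hσ, fun n hn => ?_⟩
      have h1 : 1 ≤ n := by omega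
      have := ff_window k c h1
      simpa using this
    · obtain ⟨Ct, hCt1, hCt⟩ := ih ht
      have hone : 1 ≤ Ct * (σ * (t*k+1)) := by
        have h1 : (1:ℕ) ≤ t*k+1 := Nat.succ_le_succ (Nat.zero_le _)
        calc (1:ℕ) = 1 * (1 * 1) := by ring
          _ ≤ Ct * (σ * (t*k+1)) := Nat.mul_le_mul hCt1 (Nat.mul_le_mul hσ h1)
      refine ⟨Ct * (σ * (t*k+1)), hone, fun n hn => ?_⟩
      have htk : t ≤ t * k := Nat.le_mul_of_pos_right t (by omega)
      have htk1 : t * k + k = (t+1)*k := by ring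
      have hn' : (t+1)*(k+1) ≤ n := by nlinarith
      have step1 := hCt n hn'
      set B := ∑ m ∈ Finset.Icc (n - (t+1)*k) (n - (t+1)), ff k c m with hB
      have step2 : ∀ m ∈ Finset.Icc (n - t*k) (n - t), ff k c m ≤ σ * B := by
        intro m hm
        have h2 := Finset.mem_Icc.mp hm
        have hm1 : 1 ≤ m := by
          have : t * k + (2*k + t + 2) ≤ n := by nlinarith
          omega
        refine le_trans (ff_window k c hm1) ?_
        refine Nat.mul_le_mul_left _ ?_
        refine Finset.sum_le_sum_of_subset ?_
        intro m' hm'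
        have h3 := Finset.mem_Icc.mp hm'
        refine Finset.mem_Icc.mpr ⟨?_, ?_⟩ <;> omega
      calc ff k c n ≤ Ct * ∑ m ∈ Finset.Icc (n - t*k) (n - t), ff k c m := step1
        _ ≤ Ct * ∑ _m ∈ Finset.Icc (n - t*k) (n - t), σ * B :=
            Nat.mul_le_mul_left _ (Finset.sum_le_sum step2)
        _ = Ct * ((Finset.Icc (n - t*k) (n - t)).card * (σ * B)) := by
            rw [Finset.sum_const, smul_eq_mul]
        _ ≤ Ct * ((t*k+1) * (σ * B)) := by
            refine Nat.mul_le_mul_left _ (Nat.mul_le_mul_right _ ?_)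
            rw [Nat.card_Icc]
            omega
        _ = Ct * (σ * (t*k+1)) * B := by ring

/-- bounded ratio: ff n ≤ D * ff (n - i) for 1 ≤ i ≤ k, n large -/
lemma ff_ratio_bound (hk : 2 ≤ k) (hck : 0 < c k)
    {N0 : ℕ} (hN01 : 1 ≤ N0) (hN0 : ∀ n, N0 ≤ n → 1 ≤ ff k c n) :
    ∃ D nD : ℕ, 1 ≤ D ∧ ∀ n, nD ≤ n → ∀ i, 1 ≤ i → i ≤ k →
      ff k c n ≤ D * ff k c (n - i) := by
  set t0 := N0 + k with ht0
  obtain ⟨Ct, hCt1, hCt⟩ := ff_iter k c hk hck t0 (by omega)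
  have hone : 1 ≤ Ct * (t0 * k + 1) := by
    have h1 : (1:ℕ) ≤ t0*k+1 := Nat.succ_le_succ (Nat.zero_le _)
    calc (1:ℕ) = 1 * 1 := by ring
      _ ≤ Ct * (t0*k+1) := Nat.mul_le_mul hCt1 h1
  refine ⟨Ct * (t0 * k + 1), (t0+1)*(k+1), hone, fun n hn i hi1 hik => ?_⟩
  have step1 := hCt n hn
  have htk : t0 ≤ t0 * k := Nat.le_mul_of_pos_right t0 (by omega)
  have step2 : ∀ m ∈ Finset.Icc (n - t0*k) (n - t0), ff k c m ≤ ff k c (n - i) := by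
    intro m hm
    have h2 := Finset.mem_Icc.mp hm
    refine ff_coarse_mono k c hN0 ?_
    have haux : t0 + 1 ≤ (t0+1)*(k+1) := Nat.le_mul_of_pos_right _ (by omega)
    omega
  calc ff k c n ≤ Ct * ∑ m ∈ Finset.Icc (n - t0*k) (n - t0), ff k c m := step1
    _ ≤ Ct * ∑ _m ∈ Finset.Icc (n - t0*k) (n - t0), ff k c (n - i) :=
        Nat.mul_le_mul_left _ (Finset.sum_le_sum step2)
    _ = Ct * ((Finset.Icc (n - t0*k) (n - t0)).card * ff k c (n - i)) := by
        rw [Finset.sum_const, smul_eq_mul]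
    _ ≤ Ct * ((t0*k+1) * ff k c (n - i)) := by
        refine Nat.mul_le_mul_left _ (Nat.mul_le_mul_right _ ?_)
        rw [Nat.card_Icc]
        omega
    _ = Ct * (t0 * k + 1) * ff k c (n - i) := by ring

/-! ## Rational ratio analysis -/

noncomputable def F (k : ℕ) (c : ℕ → ℕ) (n : ℕ) : ℚ := (ff k c n : ℚ)

lemma F_nonneg (n : ℕ) : 0 ≤ F k c n := Nat.cast_nonneg _

lemma F_rec {v : ℕ} (hv : k ≤ v) (hv1 : 1 ≤ v) :
    F k c v = ∑ i ∈ Finset.Icc 1 k, (c i : ℚ) * F k c (v - i) := by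
  unfold F
  rw [ff_eq' k c hv hv1]
  push_cast
  rfl

lemma extendLo {N0 : ℕ} (hN0 : ∀ n, N0 ≤ n → 1 ≤ ff k c n)
    {n0 : ℕ} {m : ℚ} (hn0 : k + 1 ≤ n0)
    (base : ∀ v, n0 ≤ v → v ≤ n0 + k - 1 → m * F k c v ≤ F k c (v+1)) :
    ∀ v, n0 ≤ v → m * F k c v ≤ F k c (v+1) := by
  intro v hv
  induction v using Nat.strong_induction_on with
  | _ v ih =>
    by_cases hvk : v ≤ n0 + k - 1
    · exact base v hv hvk
    · have hvk' : n0 + k ≤ v := by omega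
      have h1 : F k c (v+1) = ∑ i ∈ Finset.Icc 1 k, (c i : ℚ) * F k c (v + 1 - i) :=
        F_rec k c (by omega) (by omega)
      have h2 : F k c v = ∑ i ∈ Finset.Icc 1 k, (c i : ℚ) * F k c (v - i) :=
        F_rec k c (by omega) (by omega)
      rw [h1, h2, Finset.mul_sum]
      refine Finset.sum_le_sum (fun i hi => ?_)
      have h3 := Finset.mem_Icc.mp hi
      have h4 : v + 1 - i = (v - i) + 1 := by omega
      rw [h4]
      have h5 := ih (v - i) (by omega) (by omega)
      calc m * ((c i : ℚ) * F k c (v - i)) = (c i : ℚ) * (m * F k c (v - i)) := by ring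
        _ ≤ (c i : ℚ) * F k c ((v - i) + 1) :=
            mul_le_mul_of_nonneg_left h5 (Nat.cast_nonneg _)

lemma extendHi {N0 : ℕ} (hN0 : ∀ n, N0 ≤ n → 1 ≤ ff k c n)
    {n0 : ℕ} {M : ℚ} (hn0 : k + 1 ≤ n0)
    (base : ∀ v, n0 ≤ v → v ≤ n0 + k - 1 → F k c (v+1) ≤ M * F k c v) :
    ∀ v, n0 ≤ v → F k c (v+1) ≤ M * F k c v := by
  intro v hv
  induction v using Nat.strong_induction_on with
  | _ v ih =>
    by_cases hvk : v ≤ n0 + k - 1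
    · exact base v hv hvk
    · have hvk' : n0 + k ≤ v := by omega
      have h1 : F k c (v+1) = ∑ i ∈ Finset.Icc 1 k, (c i : ℚ) * F k c (v + 1 - i) :=
        F_rec k c (by omega) (by omega)
      have h2 : F k c v = ∑ i ∈ Finset.Icc 1 k, (c i : ℚ) * F k c (v - i) :=
        F_rec k c (by omega) (by omega)
      rw [h1, h2, Finset.mul_sum]
      refine Finset.sum_le_sum (fun i hi => ?_)
      have h3 := Finset.mem_Icc.mp hi
      have h4 : v + 1 - i = (v - i) + 1 := by omega
      rw [h4]
      have h5 := ih (v - i) (by omega) (by omega)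
      calc (c i : ℚ) * F k c ((v - i) + 1) ≤ (c i : ℚ) * (M * F k c (v - i)) :=
            mul_le_mul_of_nonneg_left h5 (Nat.cast_nonneg _)
        _ = M * ((c i : ℚ) * F k c (v - i)) := by ring

lemma gap_step {n0 : ℕ} {m : ℚ}
    (hLo : ∀ v, n0 ≤ v → m * F k c v ≤ F k c (v+1))
    {t : ℕ} (ht1 : 1 ≤ t) (htk : t ≤ k) (hct : 1 ≤ c t)
    {v : ℕ} (hv : n0 + k ≤ v) (hvk : k + 1 ≤ v) :
    F k c (v+1) - m * F k c v ≤ F k c (v+t+1) - m * F k c (v+t) := by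
  have h1 : F k c (v+t+1) = ∑ i ∈ Finset.Icc 1 k, (c i : ℚ) * F k c (v + t + 1 - i) :=
    F_rec k c (by omega) (by omega)
  have h2 : F k c (v+t) = ∑ i ∈ Finset.Icc 1 k, (c i : ℚ) * F k c (v + t - i) :=
    F_rec k c (by omega) (by omega)
  have key : F k c (v+t+1) - m * F k c (v+t)
      = ∑ i ∈ Finset.Icc 1 k, (c i : ℚ) * (F k c ((v + t - i) + 1) - m * F k c (v + t - i)) := by
    rw [h1, h2, Finset.mul_sum, ← Finset.sum_sub_distrib]
    refine Finset.sum_congr rfl (fun i hi => ?_)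
    have h3 := Finset.mem_Icc.mp hi
    have h4 : v + t + 1 - i = (v + t - i) + 1 := by omega
    rw [h4]
    ring
  rw [key]
  have htmem : t ∈ Finset.Icc 1 k := Finset.mem_Icc.mpr ⟨ht1, htk⟩
  have hterm : ∀ i ∈ Finset.Icc 1 k,
      0 ≤ (c i : ℚ) * (F k c ((v + t - i) + 1) - m * F k c (v + t - i)) := by
    intro i hi
    have h3 := Finset.mem_Icc.mp hi
    refine mul_nonneg (Nat.cast_nonneg _) ?_
    have := hLo (v + t - i) (by omega)
    linarith
  have hsingle := Finset.single_le_sum hterm htmem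
  have h5 : v + t - t = v := by omega
  rw [h5] at hsingle
  have hge : (1:ℚ) ≤ (c t : ℚ) := by exact_mod_cast hct
  have h6 : 0 ≤ F k c (v+1) - m * F k c v := by
    have := hLo v (by omega)
    linarith
  calc F k c (v+1) - m * F k c v = 1 * (F k c (v+1) - m * F k c v) := by ring
    _ ≤ (c t : ℚ) * (F k c (v+1) - m * F k c v) := mul_le_mul_of_nonneg_right hge h6
    _ ≤ _ := hsingle

lemma F_step_up {D nD : ℕ} (hD : ∀ n, nD ≤ n → ∀ i, 1 ≤ i → i ≤ k →
      ff k c n ≤ D * ff k c (n - i))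
    {v t : ℕ} (ht1 : 1 ≤ t) (htk : t ≤ k) (hv : nD ≤ v) :
    F k c (v + t) ≤ (D:ℚ) * F k c v := by
  have h := hD (v + t) (by omega) t ht1 htk
  have h2 : v + t - t = v := by omega
  rw [h2] at h
  unfold F
  exact_mod_cast h

lemma path_lemma {N0 D nD : ℕ}
    (hD : ∀ n, nD ≤ n → ∀ i, 1 ≤ i → i ≤ k → ff k c n ≤ D * ff k c (n - i))
    {n0 : ℕ} {m : ℚ}
    (hLo : ∀ v, n0 ≤ v → m * F k c v ≤ F k c (v+1)) :
    ∀ (l : List ℕ), (∀ x ∈ l, 1 ≤ x ∧ x ≤ k ∧ 1 ≤ c x) →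
    ∀ j0, n0 + k ≤ j0 → k + 1 ≤ j0 → nD ≤ j0 →
      (F k c (j0+1) - m * F k c j0 ≤ F k c (j0 + l.sum + 1) - m * F k c (j0 + l.sum))
      ∧ F k c (j0 + l.sum) ≤ (D:ℚ) ^ l.length * F k c j0 := by
  intro l
  induction l with
  | nil =>
    intro _ j0 _ _ _
    simp
  | cons x xs ih =>
    intro hmem j0 hj1 hj2 hj3
    have hx := hmem x List.mem_cons_self
    have hsum : j0 + (x :: xs).sum = (j0 + x) + xs.sum := by
      simp [List.sum_cons]; omega
    have hlen : (x :: xs).length = xs.length + 1 := rfl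
    have ihx := ih (fun y hy => hmem y (List.mem_cons_of_mem x hy)) (j0 + x)
      (by omega) (by omega) (by omega)
    constructor
    · have step := gap_step k c hLo hx.1 hx.2.1 hx.2.2 (v := j0) (by omega) (by omega)
      rw [hsum]
      exact le_trans step ihx.1
    · have step := F_step_up k c hD hx.1 hx.2.1 (v := j0) hj3
      rw [hsum, hlen]
      calc F k c ((j0 + x) + xs.sum) ≤ (D:ℚ) ^ xs.length * F k c (j0 + x) := ihx.2
        _ ≤ (D:ℚ) ^ xs.length * ((D:ℚ) * F k c j0) := by
            refine mul_le_mul_of_nonneg_left step (by positivity)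
        _ = (D:ℚ) ^ (xs.length + 1) * F k c j0 := by ring

lemma repr_list : ∀ w, 1 ≤ ff k c w →
    ∃ l : List ℕ, (∀ x ∈ l, 1 ≤ x ∧ x ≤ k ∧ 1 ≤ c x) ∧ l.sum = w := by
  intro w
  induction w using Nat.strong_induction_on with
  | _ w ih =>
    intro hw
    rcases Nat.eq_zero_or_pos w with rfl | hw1
    · exact ⟨[], by simp⟩
    · rw [ff_eq k c hw1] at hw
      have hne : ∑ i ∈ Finset.Icc 1 k, c i * (if i ≤ w then ff k c (w - i) else 0) ≠ 0 := by
        omega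
      obtain ⟨i, hi, hterm⟩ := Finset.exists_ne_zero_of_sum_ne_zero hne
      have h2 := Finset.mem_Icc.mp hi
      have hci : 1 ≤ c i := by
        rcases Nat.eq_zero_or_pos (c i) with h | h
        · exfalso; apply hterm; rw [h]; ring
        · exact h
      have hiw : i ≤ w := by
        by_contra h
        apply hterm
        rw [if_neg h]
        ring
      have hffwi : 1 ≤ ff k c (w - i) := by
        rcases Nat.eq_zero_or_pos (ff k c (w - i)) with h | h
        · exfalso; apply hterm; rw [if_pos hiw, h]; ring
        · exact h
      obtain ⟨l', hl'mem, hl'sum⟩ := ih (w - i) (by omega) hffwi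
      refine ⟨i :: l', ?_, ?_⟩
      · intro x hx
        rcases List.mem_cons.mp hx with rfl | hx'
        · exact ⟨h2.1, h2.2, hci⟩
        · exact hl'mem x hx'
      · simp [List.sum_cons, hl'sum]
        omega

/-- each element ≥ 1 implies length ≤ sum -/
lemma length_le_sum : ∀ (l : List ℕ), (∀ x ∈ l, 1 ≤ x) → l.length ≤ l.sum := by
  intro l
  induction l with
  | nil => simp
  | cons x xs ih =>
    intro h
    have h1 := h x List.mem_cons_self
    have h2 := ih (fun y hy => h y (List.mem_cons_of_mem x hy))
    simp only [List.length_cons, List.sum_cons]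
    omega

lemma pow_bound (t : ℚ) (ht : 0 ≤ t) :
    ∀ n : ℕ, (n : ℚ) * t ≤ 1/2 → (1+t)^n ≤ 1 + 2*(n:ℚ)*t := by
  intro n
  induction n with
  | zero => norm_num
  | succ j ih =>
    intro h
    have hj : (j:ℚ) * t ≤ 1/2 := by
      have : (j:ℚ) ≤ (j+1 : ℕ) := by push_cast; linarith
      nlinarith
    have ihj := ih hj
    have hexp : (1+t)^(j+1) = (1+t)^j * (1+t) := by ring
    rw [hexp]
    have h1t : (0:ℚ) ≤ 1 + t := by linarith
    have hcast : ((j+1 : ℕ) : ℚ) = (j:ℚ) + 1 := by push_cast; ring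
    rw [hcast] at h ⊢
    have h2 : (2:ℚ)*(j:ℚ)*t*t ≤ t := by nlinarith
    nlinarith [pow_nonneg h1t j]


lemma geom_small {η G0 γ : ℚ} (hη0 : 0 < η) (hη1 : η ≤ 1) (hG00 : 0 ≤ G0) (hγ0 : 0 < γ) :
    ∃ j : ℕ, (1-η)^j * G0 < γ := by
  rcases eq_or_lt_of_le hG00 with h | h
  · exact ⟨0, by rw [← h]; simpa using hγ0⟩
  · obtain ⟨j, hj⟩ := exists_nat_ge (G0/(γ*η))
    refine ⟨j, ?_⟩
    have hb : 1 + (j:ℚ)*η ≤ (1+η)^j := by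
      have := one_add_mul_le_pow (by linarith : (-2:ℚ) ≤ η) j
      linarith [this]
    have hθ0 : (0:ℚ) ≤ 1 - η := by linarith
    have hθj0 : (0:ℚ) ≤ (1-η)^j := pow_nonneg hθ0 j
    have e1 : (0:ℚ) ≤ 1 - η^2 := by nlinarith
    have e2 : (1:ℚ) - η^2 ≤ 1 := by nlinarith
    have hprod : (1+(j:ℚ)*η) * (1-η)^j ≤ 1 := by
      calc (1+(j:ℚ)*η) * (1-η)^j ≤ (1+η)^j * (1-η)^j := mul_le_mul_of_nonneg_right hb hθj0
        _ = ((1+η)*(1-η))^j := by rw [mul_pow]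
        _ = (1 - η^2)^j := by congr 1; ring
        _ ≤ 1 := pow_le_one₀ e1 e2
    have hjη : G0 ≤ (j:ℚ) * (γ*η) := by
      have hγη : 0 < γ*η := by positivity
      calc G0 = (G0/(γ*η)) * (γ*η) := by field_simp
        _ ≤ (j:ℚ) * (γ*η) := mul_le_mul_of_nonneg_right hj (le_of_lt hγη)
    have hpos : (0:ℚ) < 1 + (j:ℚ)*η := by positivity
    have hkey : (1+(j:ℚ)*η) * ((1-η)^j * G0) ≤ G0 := by
      calc (1+(j:ℚ)*η) * ((1-η)^j * G0) = ((1+(j:ℚ)*η) * (1-η)^j) * G0 := by ring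
        _ ≤ 1 * G0 := mul_le_mul_of_nonneg_right hprod (le_of_lt h)
        _ = G0 := by ring
    have hG0lt : G0 < γ * (1 + (j:ℚ)*η) := by nlinarith
    nlinarith

set_option maxHeartbeats 1000000 in
lemma stage_lemma {N0 D nD : ℕ}
    (hN0 : ∀ n, N0 ≤ n → 1 ≤ ff k c n)
    (hD1q : (1:ℚ) ≤ (D:ℚ))
    (hD : ∀ n, nD ≤ n → ∀ i, 1 ≤ i → i ≤ k → ff k c n ≤ D * ff k c (n - i))
    {Z N2 : ℕ} (hZ : Z = N0 + 4*k) (hN2 : N2 = nD + N0 + 2*k + 2) (hk : 2 ≤ k)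
    (n : ℕ) (m M : ℚ) (hn : N2 ≤ n) (hm : 0 < m) (hmM : m ≤ M)
    (hLo : ∀ v, n ≤ v → m * F k c v ≤ F k c (v+1))
    (hHi : ∀ v, n ≤ v → F k c (v+1) ≤ M * F k c v) :
    ∃ (n' : ℕ) (m' M' : ℚ), N2 ≤ n' ∧ 0 < m' ∧ m ≤ m' ∧ m' ≤ M' ∧
      (∀ v, n' ≤ v → m' * F k c v ≤ F k c (v+1)) ∧
      (∀ v, n' ≤ v → F k c (v+1) ≤ M' * F k c v) ∧
      M' - m' ≤ (1 - 1/(D:ℚ)^Z) * (M - m) := by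
  have Fpos : ∀ v, N0 ≤ v → 0 < F k c v := by
    intro v hv
    have := hN0 v hv
    unfold F
    exact_mod_cast this
  have hDZ1 : (1:ℚ) ≤ (D:ℚ)^Z := by
    calc (1:ℚ) = 1^Z := by norm_num
      _ ≤ (D:ℚ)^Z := pow_le_pow_left₀ (by norm_num) hD1q Z
  have hDZ0 : (0:ℚ) < (D:ℚ)^Z := by linarith
  have hWne : (Finset.Icc (n+k) (n+2*k-1)).Nonempty := by
    refine Finset.nonempty_Icc.mpr ?_
    omega
  obtain ⟨j0, hj0W, hj0max⟩ :=
    Finset.exists_max_image (Finset.Icc (n+k) (n+2*k-1)) (fun v => F k c (v+1) / F k c v) hWne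
  have hj0m := Finset.mem_Icc.mp hj0W
  have hFj0 : 0 < F k c j0 := Fpos j0 (by omega)
  obtain ⟨Mact, hMact⟩ : ∃ q : ℚ, q = F k c (j0+1) / F k c j0 := ⟨_, rfl⟩
  have hMactFj0 : Mact * F k c j0 = F k c (j0+1) := by
    rw [hMact]
    exact div_mul_cancel₀ _ (ne_of_gt hFj0)
  have hHiact : ∀ v, n + k ≤ v → F k c (v+1) ≤ Mact * F k c v := by
    refine extendHi k c hN0 (by omega) ?_
    intro v hv hv2
    have hvW : v ∈ Finset.Icc (n+k) (n+2*k-1) := Finset.mem_Icc.mpr ⟨hv, by omega⟩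
    have hle := hj0max v hvW
    have hFv : 0 < F k c v := Fpos v (by omega)
    rw [hMact]
    exact (div_le_iff₀ hFv).mp hle
  have hMactM : Mact ≤ M := by
    rw [hMact, div_le_iff₀ hFj0]
    exact hHi j0 (by omega)
  have hmMact : m ≤ Mact := by
    rw [hMact, le_div_iff₀ hFj0]
    exact hLo j0 (by omega)
  obtain ⟨n', hn'⟩ : ∃ n' : ℕ, n' = n + N0 + 3*k := ⟨_, rfl⟩
  obtain ⟨m', hm'⟩ : ∃ q : ℚ, q = m + (Mact - m)/(D:ℚ)^Z := ⟨_, rfl⟩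
  have hdiv0 : 0 ≤ (Mact - m)/(D:ℚ)^Z := div_nonneg (by linarith) (le_of_lt hDZ0)
  have hBase : ∀ v', n' ≤ v' → v' ≤ n' + k - 1 → m' * F k c v' ≤ F k c (v'+1) := by
    intro v' h1 h2
    have hw1 : v' = j0 + (v' - j0) := by omega
    have hw2 : N0 ≤ v' - j0 := by omega
    have hw3 : v' - j0 ≤ Z := by omega
    obtain ⟨l, hlmem, hlsum⟩ := repr_list k c (v' - j0) (hN0 _ hw2)
    have hlen : l.length ≤ Z := by
      have := length_le_sum l (fun x hx => (hlmem x hx).1)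
      omega
    have hpath := path_lemma k c (N0 := N0) hD hLo l hlmem j0 (by omega) (by omega) (by omega)
    rw [hlsum, ← hw1] at hpath
    have h3 : F k c v' ≤ (D:ℚ)^Z * F k c j0 := by
      refine le_trans hpath.2 ?_
      refine mul_le_mul_of_nonneg_right ?_ (F_nonneg k c j0)
      exact pow_le_pow_right₀ hD1q hlen
    have h4 : (Mact - m)/(D:ℚ)^Z * F k c v' ≤ (Mact - m) * F k c j0 := by
      calc (Mact - m)/(D:ℚ)^Z * F k c v' ≤ (Mact - m)/(D:ℚ)^Z * ((D:ℚ)^Z * F k c j0) :=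
            mul_le_mul_of_nonneg_left h3 hdiv0
        _ = (Mact - m) * F k c j0 := by
            field_simp
    have h5 := hpath.1
    calc m' * F k c v' = m * F k c v' + (Mact - m)/(D:ℚ)^Z * F k c v' := by rw [hm']; ring
      _ ≤ m * F k c v' + (Mact - m) * F k c j0 := by linarith
      _ = m * F k c v' + (Mact * F k c j0 - m * F k c j0) := by ring
      _ = m * F k c v' + (F k c (j0+1) - m * F k c j0) := by rw [hMactFj0]
      _ ≤ m * F k c v' + (F k c (v'+1) - m * F k c v') := by linarith
      _ = F k c (v'+1) := by ring
  have hLo' : ∀ v, n' ≤ v → m' * F k c v ≤ F k c (v+1) :=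
    extendLo k c hN0 (by omega) hBase
  have hHi' : ∀ v, n' ≤ v → F k c (v+1) ≤ Mact * F k c v :=
    fun v hv => hHiact v (by omega)
  have hm'Mact : m' ≤ Mact := by
    rw [hm']
    have : (Mact - m)/(D:ℚ)^Z ≤ Mact - m := div_le_self (by linarith) hDZ1
    linarith
  refine ⟨n', m', Mact, by omega, by rw [hm']; linarith, by rw [hm']; linarith, hm'Mact,
    hLo', hHi', ?_⟩
  have hgap : Mact - m' = (1 - 1/(D:ℚ)^Z) * (Mact - m) := by
    rw [hm']
    field_simp
    ring
  rw [hgap]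
  have hθ0 : (0:ℚ) ≤ 1 - 1/(D:ℚ)^Z := by
    have : 1/(D:ℚ)^Z ≤ 1 := by
      rw [div_le_one hDZ0]
      linarith
    linarith
  exact mul_le_mul_of_nonneg_left (by linarith) hθ0

lemma exists_Psum (hk : 2 ≤ k) (hck : 0 < c k)
    (hgcd : Finset.gcd ((Finset.Icc 1 k).filter fun m => c m ≠ 0) id = 1) :
    ∃ Psum : ℕ, 3 ≤ Psum ∧ 2 ≤ ff k c Psum := by
  have hkT : k ∈ (Finset.Icc 1 k).filter (fun m => c m ≠ 0) := by
    refine Finset.mem_filter.mpr ⟨Finset.mem_Icc.mpr ⟨by omega, le_refl k⟩, by omega⟩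
  have hp : ∃ p ∈ (Finset.Icc 1 k).filter (fun m => c m ≠ 0), p ≠ k := by
    by_contra h
    push_neg at h
    have hsing : (Finset.Icc 1 k).filter (fun m => c m ≠ 0) = {k} := by
      refine Finset.eq_singleton_iff_unique_mem.mpr ⟨hkT, fun x hx => h x hx⟩
    rw [hsing] at hgcd
    simp [Finset.gcd_singleton] at hgcd
    omega
  obtain ⟨p, hpT, hpk⟩ := hp
  have hpm := Finset.mem_filter.mp hpT
  have hpIcc := Finset.mem_Icc.mp hpm.1
  refine ⟨p + k, by omega, ?_⟩
  rw [ff_eq k c (by omega)]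
  have hsub : {p, k} ⊆ Finset.Icc 1 k := by
    intro x hx
    rcases Finset.mem_insert.mp hx with rfl | hx'
    · exact hpm.1
    · rw [Finset.mem_singleton.mp hx']
      exact Finset.mem_Icc.mpr ⟨by omega, le_refl k⟩
  have hpair : ∑ i ∈ ({p, k} : Finset ℕ), c i * (if i ≤ p + k then ff k c (p + k - i) else 0)
      ≤ ∑ i ∈ Finset.Icc 1 k, c i * (if i ≤ p + k then ff k c (p + k - i) else 0) :=
    Finset.sum_le_sum_of_subset hsub
  rw [Finset.sum_pair hpk] at hpair
  have ht1 : p + k - p = k := by omega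
  have ht2 : p + k - k = p := by omega
  rw [if_pos (by omega : p ≤ p + k), if_pos (by omega : k ≤ p + k), ht1, ht2] at hpair
  have hcp : 1 ≤ c p := by
    have := hpm.2
    omega
  have hffk1 : 1 ≤ ff k c k := by
    have := ff_ge_c k c (Finset.mem_Icc.mpr ⟨by omega, le_refl k⟩)
    omega
  have hffp1 : 1 ≤ ff k c p := by
    have := ff_ge_c k c hpm.1
    omega
  have e1 : 1 ≤ c p * ff k c k := Nat.one_le_iff_ne_zero.mpr (by positivity)
  have e2 : 1 ≤ c k * ff k c p := Nat.one_le_iff_ne_zero.mpr (by positivity)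
  omega

set_option maxHeartbeats 1000000 in
/-- Main analytic lemma: ff is eventually strictly increasing. -/
lemma eventually_strict (hk : 2 ≤ k) (hck : 0 < c k)
    (hgcd : Finset.gcd ((Finset.Icc 1 k).filter fun m => c m ≠ 0) id = 1) :
    ∃ n2 : ℕ, ∀ v, n2 ≤ v → ff k c v < ff k c (v+1) := by
  obtain ⟨N0, hN01, hN0⟩ := frobenius k c hk hck hgcd
  obtain ⟨D, nD, hD1, hD⟩ := ff_ratio_bound k c hk hck hN01 hN0
  obtain ⟨Z, hZ⟩ : ∃ Z : ℕ, Z = N0 + 4*k := ⟨_, rfl⟩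
  obtain ⟨N2, hN2⟩ : ∃ N2 : ℕ, N2 = nD + N0 + 2*k + 2 := ⟨_, rfl⟩
  have Fpos : ∀ v, N0 ≤ v → 0 < F k c v := by
    intro v hv
    have := hN0 v hv
    unfold F
    exact_mod_cast this
  have hD1q : (1:ℚ) ≤ (D:ℚ) := by exact_mod_cast hD1
  have hDZ1 : (1:ℚ) ≤ (D:ℚ)^Z := by
    calc (1:ℚ) = 1^Z := by norm_num
      _ ≤ (D:ℚ)^Z := pow_le_pow_left₀ (by norm_num) hD1q Z
  have hDZ0 : (0:ℚ) < (D:ℚ)^Z := by linarith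
  obtain ⟨η, hη⟩ : ∃ η : ℚ, η = 1/(D:ℚ)^Z := ⟨_, rfl⟩
  have hη0 : 0 < η := by rw [hη]; positivity
  have hη1 : η ≤ 1 := by
    rw [hη, div_le_one hDZ0]
    linarith
  -- base stage
  have hW0ne : (Finset.Icc N2 (N2+k-1)).Nonempty := by
    refine Finset.nonempty_Icc.mpr ?_
    omega
  obtain ⟨jM, hjMW, hjMmax⟩ :=
    Finset.exists_max_image (Finset.Icc N2 (N2+k-1)) (fun v => F k c (v+1) / F k c v) hW0ne
  obtain ⟨jm, hjmW, hjmmin⟩ :=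
    Finset.exists_min_image (Finset.Icc N2 (N2+k-1)) (fun v => F k c (v+1) / F k c v) hW0ne
  have hjMm := Finset.mem_Icc.mp hjMW
  have hjmm := Finset.mem_Icc.mp hjmW
  obtain ⟨m0, hm0def⟩ : ∃ q : ℚ, q = F k c (jm+1) / F k c jm := ⟨_, rfl⟩
  obtain ⟨M0, hM0def⟩ : ∃ q : ℚ, q = F k c (jM+1) / F k c jM := ⟨_, rfl⟩
  have hFjm : 0 < F k c jm := Fpos jm (by omega)
  have hFjM : 0 < F k c jM := Fpos jM (by omega)
  have hm00 : 0 < m0 := by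
    rw [hm0def]
    exact div_pos (Fpos _ (by omega)) hFjm
  have hm0M0 : m0 ≤ M0 := by
    have h2 := hjmmin jM hjMW
    rw [hm0def, hM0def]
    exact h2
  have hLo0 : ∀ v, N2 ≤ v → m0 * F k c v ≤ F k c (v+1) := by
    refine extendLo k c hN0 (by omega) ?_
    intro v hv hv2
    have hvW : v ∈ Finset.Icc N2 (N2+k-1) := Finset.mem_Icc.mpr ⟨hv, hv2⟩
    have hle := hjmmin v hvW
    have hFv : 0 < F k c v := Fpos v (by omega)
    rw [hm0def]
    exact (le_div_iff₀ hFv).mp hle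
  have hHi0 : ∀ v, N2 ≤ v → F k c (v+1) ≤ M0 * F k c v := by
    refine extendHi k c hN0 (by omega) ?_
    intro v hv hv2
    have hvW : v ∈ Finset.Icc N2 (N2+k-1) := Finset.mem_Icc.mpr ⟨hv, hv2⟩
    have hle := hjMmax v hvW
    have hFv : 0 < F k c v := Fpos v (by omega)
    rw [hM0def]
    exact (div_le_iff₀ hFv).mp hle
  obtain ⟨G0, hG0⟩ : ∃ q : ℚ, q = M0 - m0 := ⟨_, rfl⟩
  have hG00 : 0 ≤ G0 := by rw [hG0]; linarith
  -- iteration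
  have iter : ∀ j : ℕ, ∃ (n : ℕ) (m M : ℚ), N2 ≤ n ∧ 0 < m ∧ m ≤ M ∧
      (∀ v, n ≤ v → m * F k c v ≤ F k c (v+1)) ∧
      (∀ v, n ≤ v → F k c (v+1) ≤ M * F k c v) ∧
      M - m ≤ (1-η)^j * G0 := by
    intro j
    induction j with
    | zero =>
      refine ⟨N2, m0, M0, le_refl _, hm00, hm0M0, hLo0, hHi0, by rw [hG0]; norm_num⟩
    | succ j ih =>
      obtain ⟨n, m, M, h1, h2, h3, h4, h5, h6⟩ := ih
      obtain ⟨n', m', M', g1, g2, g3, g4, g5, g6, g7⟩ :=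
        stage_lemma k c hN0 hD1q hD hZ hN2 hk n m M h1 h2 h3 h4 h5
      refine ⟨n', m', M', g1, g2, g4, g5, g6, ?_⟩
      have hθ0 : (0:ℚ) ≤ 1 - η := by linarith
      have hrw : 1 - 1/(D:ℚ)^Z = 1 - η := by rw [hη]
      rw [hrw] at g7
      calc M' - m' ≤ (1-η) * (M - m) := g7
        _ ≤ (1-η) * ((1-η)^j * G0) := mul_le_mul_of_nonneg_left h6 hθ0
        _ = (1-η)^(j+1) * G0 := by ring
  -- endgame
  obtain ⟨Psum, hP3, hffP2⟩ := exists_Psum k c hk hck hgcd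
  obtain ⟨γ, hγ⟩ : ∃ q : ℚ, q = 1 / (5 * (Psum : ℚ)) := ⟨_, rfl⟩
  have hPsq : (0:ℚ) < (Psum:ℚ) := by
    have : (0:ℕ) < Psum := by omega
    exact_mod_cast this
  have hγ0 : 0 < γ := by rw [hγ]; positivity
  have hγpow : (1+γ)^Psum ≤ 7/5 := by
    have hcond : (Psum:ℚ) * γ ≤ 1/2 := by
      rw [hγ, mul_one_div]
      rw [div_le_div_iff₀ (by positivity) (by norm_num)]
      linarith
    have hb := pow_bound γ (le_of_lt hγ0) Psum hcond
    have heq : 2*(Psum:ℚ)*γ = 2/5 := by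
      rw [hγ]
      field_simp
    rw [heq] at hb
    linarith
  obtain ⟨jstar, hjlt⟩ := geom_small hη0 hη1 hG00 hγ0
  obtain ⟨n, m, M, h1, h2, h3, h4, h5, h6⟩ := iter jstar
  by_cases hm1 : 1 < m
  · refine ⟨n, fun v hv => ?_⟩
    have := h4 v hv
    have hFv : 0 < F k c v := Fpos v (by omega)
    have hlt : F k c v < F k c (v+1) := by nlinarith
    unfold F at hlt
    exact_mod_cast hlt
  · exfalso
    push_neg at hm1
    have hMlt : M < 1 + γ := by
      have h7 : M - m ≤ (1-η)^jstar * G0 := h6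
      linarith
    have hgrow : ∀ j : ℕ, F k c (n + j) ≤ (1+γ)^j * F k c n := by
      intro j
      induction j with
      | zero => simp
      | succ j ih =>
        have hstep := h5 (n + j) (by omega)
        have hFnj : 0 ≤ F k c (n+j) := F_nonneg k c _
        have h1γ : (0:ℚ) < 1 + γ := by linarith
        have hidx : n + (j+1) = (n+j) + 1 := by omega
        rw [hidx]
        calc F k c ((n+j) + 1) ≤ M * F k c (n+j) := hstep
          _ ≤ (1+γ) * F k c (n+j) := mul_le_mul_of_nonneg_right (le_of_lt hMlt) hFnj
          _ ≤ (1+γ) * ((1+γ)^j * F k c n) := mul_le_mul_of_nonneg_left ih (le_of_lt h1γ)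
          _ = (1+γ)^(j+1) * F k c n := by ring
    have hsm : F k c n * F k c Psum ≤ F k c (n + Psum) := by
      have := ff_supermul k c n Psum
      unfold F
      exact_mod_cast this
    have hFP2 : (2:ℚ) ≤ F k c Psum := by
      unfold F
      exact_mod_cast hffP2
    have hFn : 0 < F k c n := Fpos n (by omega)
    have hfinal := hgrow Psum
    have hup : F k c (n + Psum) ≤ (7/5) * F k c n := by
      calc F k c (n + Psum) ≤ (1+γ)^Psum * F k c n := hfinal
        _ ≤ (7/5) * F k c n := mul_le_mul_of_nonneg_right hγpow (le_of_lt hFn)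
    nlinarith

/-! ## Polynomial construction -/

noncomputable def gg (k : ℕ) (c : ℕ → ℕ) : ℕ → ℤ :=
  fun n => if n = 0 then 1 else (ff k c n : ℤ) - (ff k c (n-1) : ℤ)

def dd (k : ℕ) (c : ℕ → ℕ) (N : ℕ) : ℕ → ℕ :=
  fun m => if m = 1 then 1 else if N < m then
    ∑ i ∈ Finset.Icc (m - N) k, c i * (ff k c (m - i) - ff k c (m - i - 1)) else 0

lemma ff_one (hk : 2 ≤ k) (hc1 : c 1 = 0) : ff k c 1 = 0 := by
  rw [ff_eq k c (le_refl 1)]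
  refine Finset.sum_eq_zero (fun i hi => ?_)
  have h2 := Finset.mem_Icc.mp hi
  rcases Nat.eq_or_lt_of_le h2.1 with h | h
  · rw [← h, hc1]
    ring
  · rw [if_neg (by omega)]
    ring

lemma gg_zero : gg k c 0 = 1 := by simp [gg]

lemma gg_one (hk : 2 ≤ k) (hc1 : c 1 = 0) : gg k c 1 = -1 := by
  rw [gg]
  simp [ff_one k c hk hc1, ff_zero]

lemma gg_rec {m : ℕ} (hm : 2 ≤ m) :
    gg k c m = ∑ i ∈ Finset.Icc 1 k, (if i ≤ m then (c i:ℤ) * gg k c (m-i) else 0) := by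
  have h1 : gg k c m = (ff k c m : ℤ) - (ff k c (m-1) : ℤ) := by
    rw [gg]
    simp only [if_neg (by omega : ¬ m = 0)]
  have h2 : (ff k c m : ℤ) = ∑ i ∈ Finset.Icc 1 k,
      (c i : ℤ) * (if i ≤ m then (ff k c (m-i) : ℤ) else 0) := by
    rw [ff_eq k c (by omega : 1 ≤ m)]
    push_cast
    rfl
  have h3 : (ff k c (m-1) : ℤ) = ∑ i ∈ Finset.Icc 1 k,
      (c i : ℤ) * (if i ≤ m - 1 then (ff k c (m-1-i) : ℤ) else 0) := by
    rw [ff_eq k c (by omega : 1 ≤ m - 1)]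
    push_cast
    rfl
  rw [h1, h2, h3, ← Finset.sum_sub_distrib]
  refine Finset.sum_congr rfl (fun i hi => ?_)
  have hik := Finset.mem_Icc.mp hi
  by_cases him : i ≤ m
  · rw [if_pos him]
    by_cases him1 : i ≤ m - 1
    · rw [if_pos him1, if_pos him]
      have hne : ¬ (m - i = 0) := by omega
      rw [gg]
      simp only [if_neg hne]
      have : m - 1 - i = m - i - 1 := by omega
      rw [this]
      ring
    · -- i = m
      rw [if_neg him1]
      have him' : m - i = 0 := by omega
      rw [him', ff_zero, gg_zero]
      push_cast
      rw [if_pos him]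
      ring
  · rw [if_neg him, if_neg (by omega : ¬ i ≤ m - 1), if_neg him]
    ring

lemma dd_cast {N n2 : ℕ} (hstrict : ∀ v, n2 ≤ v → ff k c v < ff k c (v+1))
    (hN : N = n2 + k + 1) (hk : 2 ≤ k)
    {m : ℕ} (hm1 : N < m) (hm2 : m ≤ N + k) :
    (dd k c N m : ℤ) = ∑ i ∈ Finset.Icc (m - N) k, (c i:ℤ) * gg k c (m-i) := by
  rw [dd]
  rw [if_neg (by omega : ¬ m = 1), if_pos hm1]
  push_cast
  refine Finset.sum_congr rfl (fun i hi => ?_)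
  have hik := Finset.mem_Icc.mp hi
  have hge : m - i ≥ n2 + 2 := by omega
  have hmono : ff k c (m - i - 1) ≤ ff k c (m - i) := by
    have h := hstrict (m - i - 1) (by omega)
    have : m - i - 1 + 1 = m - i := by omega
    rw [this] at h
    omega
  rw [Nat.cast_sub hmono]
  rw [gg]
  rw [if_neg (by omega : ¬ m - i = 0)]

lemma dd_one {N : ℕ} : dd k c N 1 = 1 := by rw [dd]; simp

lemma dd_top {N n2 : ℕ} (hstrict : ∀ v, n2 ≤ v → ff k c v < ff k c (v+1))
    (hN : N = n2 + k + 1) (hk : 2 ≤ k) (hck : 0 < c k) :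
    0 < dd k c N (N + k) := by
  rw [dd]
  rw [if_neg (by omega : ¬ N + k = 1), if_pos (by omega : N < N + k)]
  have hIcc : N + k - N = k := by omega
  rw [hIcc, Finset.Icc_self, Finset.sum_singleton]
  have h1 : N + k - k = N := by omega
  rw [h1]
  have h := hstrict (N - 1) (by omega)
  have : N - 1 + 1 = N := by omega
  rw [this] at h
  have hpos : 0 < ff k c N - ff k c (N-1) := by omega
  exact Nat.mul_pos hck hpos

open Polynomial

noncomputable def QQ (k : ℕ) (c : ℕ → ℕ) (N : ℕ) : Polynomial ℤ :=
  ∑ n ∈ Finset.range (N+1), C (gg k c n) * X ^ (N - n)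

lemma part1 (N : ℕ) :
    (X:Polynomial ℤ)^k * QQ k c N
      = ∑ m ∈ Finset.range (N+k+1), C (if m ≤ N then gg k c m else 0) * X^(N+k-m) := by
  rw [QQ, Finset.mul_sum]
  have step : ∀ n ∈ Finset.range (N+1),
      (X:Polynomial ℤ)^k * (C (gg k c n) * X^(N-n)) = C (gg k c n) * X^(N+k-n) := by
    intro n hn
    have hn' : n ≤ N := by
      have := Finset.mem_range.mp hn
      omega
    rw [mul_comm ((X:Polynomial ℤ)^k), mul_assoc, ← pow_add]
    congr 2
    omega
  rw [Finset.sum_congr rfl step]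
  have hext : ∑ m ∈ Finset.range (N+1), C (if m ≤ N then gg k c m else 0) * X^(N+k-m)
      = ∑ m ∈ Finset.range (N+k+1), C (if m ≤ N then gg k c m else 0) * X^(N+k-m) := by
    refine Finset.sum_subset (Finset.range_subset_range.mpr (by omega : N+1 ≤ N+k+1)) ?_
    intro x hx hnx
    have hxN : ¬ x ≤ N := by
      intro h
      exact hnx (Finset.mem_range.mpr (by omega))
    rw [if_neg hxN, map_zero, zero_mul]
  rw [← hext]
  refine Finset.sum_congr rfl (fun n hn => ?_)
  have hn' : n ≤ N := by
    have := Finset.mem_range.mp hn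
    omega
  rw [if_pos hn']

lemma part2 (N : ℕ) {i : ℕ} (hi1 : 1 ≤ i) (hik : i ≤ k) :
    ∑ n ∈ Finset.range (N+1), C ((c i:ℤ) * gg k c n) * X^(N+k-(i+n))
      = ∑ m ∈ Finset.range (N+k+1),
          (if i ≤ m ∧ m - i ≤ N then C ((c i:ℤ) * gg k c (m-i)) * X^(N+k-m) else 0) := by
  rw [← Finset.sum_filter]
  have hfilter : (Finset.range (N+k+1)).filter (fun m => i ≤ m ∧ m - i ≤ N)
      = Finset.Icc i (i+N) := by
    ext x
    simp only [Finset.mem_filter, Finset.mem_range, Finset.mem_Icc]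
    omega
  rw [hfilter]
  have hIco : Finset.Icc i (i+N) = Finset.Ico i (i+N+1) := by
    ext x
    simp only [Finset.mem_Icc, Finset.mem_Ico]
    omega
  rw [hIco, Finset.sum_Ico_eq_sum_range]
  have hrange : i + N + 1 - i = N + 1 := by omega
  rw [hrange]
  refine (Finset.sum_congr rfl (fun n hn => ?_)).symm
  have h1 : i + n - i = n := by omega
  rw [h1]

lemma part3 (N : ℕ) :
    (∑ i ∈ Finset.Icc 1 k, C ((c i:ℤ)) * X^(k-i)) * QQ k c N
      = ∑ m ∈ Finset.range (N+k+1),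
          C (∑ i ∈ Finset.Icc 1 k, (if i ≤ m ∧ m - i ≤ N then (c i:ℤ) * gg k c (m-i) else 0))
            * X^(N+k-m) := by
  rw [QQ, Finset.sum_mul]
  have step1 : ∀ i ∈ Finset.Icc 1 k,
      C ((c i:ℤ)) * X^(k-i) * (∑ n ∈ Finset.range (N+1), C (gg k c n) * X ^ (N - n))
        = ∑ n ∈ Finset.range (N+1), C ((c i:ℤ) * gg k c n) * X^(N+k-(i+n)) := by
    intro i hi
    have hik := Finset.mem_Icc.mp hi
    rw [Finset.mul_sum]
    refine Finset.sum_congr rfl (fun n hn => ?_)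
    have hn' : n ≤ N := by
      have := Finset.mem_range.mp hn
      omega
    have hexp : k - i + (N - n) = N + k - (i + n) := by omega
    calc C ((c i:ℤ)) * X^(k-i) * (C (gg k c n) * X^(N-n))
        = C ((c i:ℤ) * gg k c n) * (X^(k-i) * X^(N-n)) := by
          rw [map_mul]
          ring
      _ = C ((c i:ℤ) * gg k c n) * X^(N+k-(i+n)) := by
          rw [← pow_add, hexp]
  rw [Finset.sum_congr rfl step1]
  have step2 : ∀ i ∈ Finset.Icc 1 k,
      ∑ n ∈ Finset.range (N+1), C ((c i:ℤ) * gg k c n) * X^(N+k-(i+n))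
        = ∑ m ∈ Finset.range (N+k+1),
            (if i ≤ m ∧ m - i ≤ N then C ((c i:ℤ) * gg k c (m-i)) * X^(N+k-m) else 0) := by
    intro i hi
    have hik := Finset.mem_Icc.mp hi
    exact part2 k c N hik.1 hik.2
  rw [Finset.sum_congr rfl step2]
  rw [Finset.sum_comm]
  refine Finset.sum_congr rfl (fun m hm => ?_)
  rw [map_sum, Finset.sum_mul]
  refine Finset.sum_congr rfl (fun i hi => ?_)
  by_cases hcond : i ≤ m ∧ m - i ≤ N
  · rw [if_pos hcond, if_pos hcond]
  · rw [if_neg hcond, if_neg hcond, map_zero, zero_mul]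

lemma key_expand (N : ℕ) :
    ((X:Polynomial ℤ)^k - ∑ i ∈ Finset.Icc 1 k, C ((c i:ℤ)) * X^(k-i)) * QQ k c N
      = ∑ m ∈ Finset.range (N+k+1),
          C ((if m ≤ N then gg k c m else 0)
            - ∑ i ∈ Finset.Icc 1 k, (if i ≤ m ∧ m - i ≤ N then (c i:ℤ) * gg k c (m-i) else 0))
            * X^(N+k-m) := by
  rw [sub_mul, part1 k c N, part3 k c N, ← Finset.sum_sub_distrib]
  refine Finset.sum_congr rfl (fun m hm => ?_)
  rw [map_sub, sub_mul]

lemma EE_eval (hk : 2 ≤ k) (hc1 : c 1 = 0)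
    {N n2 : ℕ} (hstrict : ∀ v, n2 ≤ v → ff k c v < ff k c (v+1))
    (hN : N = n2 + k + 1) {m : ℕ} (hm : m ≤ N + k) :
    (if m ≤ N then gg k c m else 0)
      - (∑ i ∈ Finset.Icc 1 k, (if i ≤ m ∧ m - i ≤ N then (c i:ℤ) * gg k c (m-i) else 0))
    = if m = 0 then 1 else -(dd k c N m : ℤ) := by
  have hNk : k + 1 ≤ N := by omega
  by_cases hm0 : m = 0
  · subst hm0
    rw [if_pos (by omega : 0 ≤ N), if_pos rfl, gg_zero]
    have hzero : ∑ i ∈ Finset.Icc 1 k,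
        (if i ≤ 0 ∧ 0 - i ≤ N then (c i:ℤ) * gg k c (0-i) else 0) = 0 := by
      refine Finset.sum_eq_zero (fun i hi => ?_)
      have h2 := Finset.mem_Icc.mp hi
      rw [if_neg (by omega)]
    rw [hzero]
    ring
  · rw [if_neg hm0]
    by_cases hm1 : m = 1
    · subst hm1
      rw [if_pos (by omega : 1 ≤ N), gg_one k c hk hc1, dd_one]
      have hzero : ∑ i ∈ Finset.Icc 1 k,
          (if i ≤ 1 ∧ 1 - i ≤ N then (c i:ℤ) * gg k c (1-i) else 0) = 0 := by
        refine Finset.sum_eq_zero (fun i hi => ?_)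
        have h2 := Finset.mem_Icc.mp hi
        by_cases hi1 : i = 1
        · subst hi1
          rw [if_pos ⟨le_refl 1, by omega⟩, hc1]
          push_cast
          ring
        · rw [if_neg (by omega)]
      rw [hzero]
      norm_num
    · by_cases hmN : m ≤ N
      · -- 2 ≤ m ≤ N : zero
        rw [if_pos hmN]
        have hdd : dd k c N m = 0 := by
          rw [dd, if_neg hm1, if_neg (by omega : ¬ N < m)]
        rw [hdd]
        push_cast
        rw [gg_rec k c (by omega : 2 ≤ m)]
        have hsums : ∑ i ∈ Finset.Icc 1 k, (if i ≤ m then (c i:ℤ) * gg k c (m-i) else 0)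
            = ∑ i ∈ Finset.Icc 1 k,
              (if i ≤ m ∧ m - i ≤ N then (c i:ℤ) * gg k c (m-i) else 0) := by
          refine Finset.sum_congr rfl (fun i hi => ?_)
          have h2 := Finset.mem_Icc.mp hi
          by_cases hcond : i ≤ m
          · rw [if_pos hcond, if_pos ⟨hcond, by omega⟩]
          · rw [if_neg hcond, if_neg (by omega)]
        rw [hsums]
        ring
      · -- N < m ≤ N + k
        rw [if_neg hmN]
        have hmN' : N < m := by omega
        have hsum : ∑ i ∈ Finset.Icc 1 k,
            (if i ≤ m ∧ m - i ≤ N then (c i:ℤ) * gg k c (m-i) else 0)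
            = ∑ i ∈ Finset.Icc (m-N) k, (c i:ℤ) * gg k c (m-i) := by
          rw [← Finset.sum_filter]
          congr 1
          ext x
          simp only [Finset.mem_filter, Finset.mem_Icc]
          omega
        rw [hsum, ← dd_cast k c hstrict hN hk hmN' hm]
        ring

lemma final_identity (hk : 2 ≤ k) (hc1 : c 1 = 0)
    {N n2 : ℕ} (hstrict : ∀ v, n2 ≤ v → ff k c v < ff k c (v+1))
    (hN : N = n2 + k + 1) :
    ((X:Polynomial ℤ)^k - ∑ i ∈ Finset.Icc 1 k, C ((c i:ℤ)) * X^(k-i)) * QQ k c N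
      = X^(N+k) - ∑ i ∈ Finset.Icc 1 (N+k), C ((dd k c N i : ℤ)) * X^(N+k-i) := by
  rw [key_expand]
  have heval : ∀ m ∈ Finset.range (N+k+1),
      C ((if m ≤ N then gg k c m else 0)
        - ∑ i ∈ Finset.Icc 1 k, (if i ≤ m ∧ m - i ≤ N then (c i:ℤ) * gg k c (m-i) else 0))
        * X^(N+k-m)
      = C (if m = 0 then (1:ℤ) else -(dd k c N m : ℤ)) * X^(N+k-m) := by
    intro m hm
    have hm' : m ≤ N + k := by
      have := Finset.mem_range.mp hm
      omega
    rw [EE_eval k c hk hc1 hstrict hN hm']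
  rw [Finset.sum_congr rfl heval]
  have hsplit : Finset.range (N+k+1) = insert 0 (Finset.Icc 1 (N+k)) := by
    ext x
    simp only [Finset.mem_range, Finset.mem_insert, Finset.mem_Icc]
    omega
  rw [hsplit, Finset.sum_insert (by simp)]
  have h0 : C (if (0:ℕ) = 0 then (1:ℤ) else -(dd k c N 0 : ℤ)) * X^(N+k-0) = X^(N+k) := by
    rw [if_pos rfl, map_one, one_mul]
    norm_num
  rw [h0]
  have hrest : ∑ m ∈ Finset.Icc 1 (N+k),
      C (if m = 0 then (1:ℤ) else -(dd k c N m : ℤ)) * X^(N+k-m)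
      = -∑ m ∈ Finset.Icc 1 (N+k), C ((dd k c N m : ℤ)) * X^(N+k-m) := by
    rw [← Finset.sum_neg_distrib]
    refine Finset.sum_congr rfl (fun m hm => ?_)
    have h2 := Finset.mem_Icc.mp hm
    rw [if_neg (by omega), map_neg, neg_mul]
  rw [hrest]
  ring

end ZD

open Polynomial

/-- Every ZLRR has a derived PLRR: there exist `L ≥ 1` and non-negative integers
`d₁, …, d_L` with `d₁ > 0` and `d_L > 0` such that `P(x)` divides
`x^L - d₁ x^(L-1) - ⋯ - d_L` in `ℤ[x]`. -/
theorem zlrr_has_derived_plrr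
    (k : ℕ) (hk : 2 ≤ k) (c : ℕ → ℕ) (hc1 : c 1 = 0) (hck : 0 < c k)
    (hgcd : Finset.gcd ((Finset.Icc 1 k).filter fun m => c m ≠ 0) id = 1)
    (P : Polynomial ℤ)
    (hP : P = X ^ k - ∑ i ∈ Finset.Icc 1 k, C (c i : ℤ) * X ^ (k - i)) :
    ∃ L : ℕ, ∃ d : ℕ → ℕ, 0 < L ∧ 0 < d 1 ∧ 0 < d L ∧
      P ∣ (X ^ L - ∑ i ∈ Finset.Icc 1 L, C (d i : ℤ) * X ^ (L - i)) := by
  obtain ⟨n2, hstrict⟩ := ZD.eventually_strict k c hk hck hgcd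
  refine ⟨(n2 + k + 1) + k, ZD.dd k c (n2 + k + 1), by omega, ?_, ?_, ?_⟩
  · rw [ZD.dd_one]
    omega
  · exact ZD.dd_top k c hstrict rfl hk hck
  · refine ⟨ZD.QQ k c (n2 + k + 1), ?_⟩
    rw [hP]
    exact (ZD.final_identity k c hk hc1 hstrict rfl).symm
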